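/- arXiv:1911.12518 — 7 statements merged into one kernel-verified Lean document; each statement's English description precedes it below -/
import Mathlib

section
/- Let μ be the standard Gaussian measure on ℝ^n (the product of n one-dimensional standard Gaussians, i.e. each coordinate of a is i.i.d. N(0,1)). Then for all x, z ∈ ℝ^n, the expected phase-retrieval residual satisfies ∫ (⟨a, z⟩² − ⟨a, x⟩²)² dμ(a) = 3‖z‖⁴ + 3‖x‖⁴ − 2‖z‖²‖x‖² − 4⟨z, x⟩². -/
open MeasureTheory ProbabilityTheory Real Filter
open scoped ENNReal NNReal

noncomputable abbrev γm : Measure ℝ := gaussianReal 0 1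


lemma hasDerivAt_gauss (x : ℝ) :
    HasDerivAt (fun x : ℝ => Real.exp (-x ^ 2 / 2)) (-x * Real.exp (-x ^ 2 / 2)) x := by
  have h1 : HasDerivAt (fun x : ℝ => -x ^ 2 / 2) (-x) x := by
    have := ((hasDerivAt_pow 2 x).fun_neg).div_const 2
    refine this.congr_deriv ?_
    push_cast
    ring
  simpa [mul_comm] using h1.exp

lemma integrable_pow_mul_gauss (k : ℕ) :
    Integrable (fun x : ℝ => x ^ k * Real.exp (-x ^ 2 / 2)) := by
  have := integrable_rpow_mul_exp_neg_mul_sq (b := (2:ℝ)⁻¹) (by norm_num)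
    (s := (k : ℝ)) (lt_of_lt_of_le neg_one_lt_zero (Nat.cast_nonneg k))
  simp only [Real.rpow_natCast] at this
  convert this using 2 with x
  ring_nf

lemma tendsto_gauss_atTop : Tendsto (fun x : ℝ => Real.exp (-x ^ 2 / 2)) atTop (nhds 0) := by
  apply Real.tendsto_exp_atBot.comp
  apply Tendsto.atBot_div_const (by norm_num)
  exact tendsto_neg_atTop_atBot.comp (tendsto_pow_atTop (by norm_num))

lemma tendsto_gauss_atBot : Tendsto (fun x : ℝ => Real.exp (-x ^ 2 / 2)) atBot (nhds 0) := by
  apply Real.tendsto_exp_atBot.comp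
  apply Tendsto.atBot_div_const (by norm_num)
  apply tendsto_neg_atTop_atBot.comp
  have h2 : Tendsto (fun x : ℝ => (-x) ^ 2) atBot atTop :=
    (tendsto_pow_atTop (n := 2) (by norm_num)).comp tendsto_neg_atBot_atTop
  refine h2.congr fun x => by ring

lemma gauss_rec (k : ℕ) :
    ∫ x : ℝ, x ^ (k + 2) * Real.exp (-x ^ 2 / 2)
      = (k + 1 : ℝ) * ∫ x : ℝ, x ^ k * Real.exp (-x ^ 2 / 2) := by
  have h := integral_mul_deriv_eq_deriv_mul_of_integrable
    (u := fun x : ℝ => x ^ (k + 1)) (u' := fun x : ℝ => (k + 1 : ℝ) * x ^ k)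
    (v := fun x : ℝ => Real.exp (-x ^ 2 / 2)) (v' := fun x : ℝ => -x * Real.exp (-x ^ 2 / 2))
    (fun x _ => by simpa using hasDerivAt_pow (k + 1) x)
    (fun x _ => hasDerivAt_gauss x)
    ?_ ?_ ?_
  · have heq : ∀ x : ℝ, x ^ (k + 1) * (-x * Real.exp (-x ^ 2 / 2))
        = -(x ^ (k + 2) * Real.exp (-x ^ 2 / 2)) := fun x => by ring
    simp only [heq, integral_neg] at h
    rw [neg_inj.mp h]
    simp_rw [mul_assoc]
    exact integral_const_mul _ _
  · have : (fun x : ℝ => x ^ (k+1)) * (fun x : ℝ => -x * Real.exp (-x ^ 2 / 2))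
        = fun x : ℝ => -(x ^ (k + 2) * Real.exp (-x ^ 2 / 2)) := by funext x; simp only [Pi.mul_apply]; ring
    rw [this]
    exact (integrable_pow_mul_gauss (k + 2)).neg
  · have : (fun x : ℝ => (k + 1 : ℝ) * x ^ k) * (fun x : ℝ => Real.exp (-x ^ 2 / 2))
        = fun x : ℝ => (k + 1 : ℝ) * (x ^ k * Real.exp (-x ^ 2 / 2)) := by funext x; simp only [Pi.mul_apply]; ring
    rw [this]
    exact (integrable_pow_mul_gauss k).const_mul _
  · have : (fun x : ℝ => x ^ (k+1)) * (fun x : ℝ => Real.exp (-x ^ 2 / 2))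
        = fun x : ℝ => x ^ (k + 1) * Real.exp (-x ^ 2 / 2) := rfl
    rw [this]
    exact integrable_pow_mul_gauss (k + 1)

lemma gauss_I0 : ∫ x : ℝ, Real.exp (-x ^ 2 / 2) = √(2 * π) := by
  have := integral_gaussian (1/2)
  rw [show π / (1/2) = 2 * π by ring] at this
  rw [show (fun x : ℝ => Real.exp (-x ^ 2 / 2)) = fun x : ℝ => Real.exp (-(1/2) * x ^ 2)
    from funext fun x => congrArg Real.exp (by ring)]
  exact this

lemma gauss_I1 : ∫ x : ℝ, x ^ 1 * Real.exp (-x ^ 2 / 2) = 0 := by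
  have h := integral_of_hasDerivAt_of_tendsto
    (f := fun x : ℝ => -Real.exp (-x ^ 2 / 2)) (f' := fun x : ℝ => x * Real.exp (-x ^ 2 / 2))
    (fun x => by simpa using (hasDerivAt_gauss x).fun_neg)
    (by simpa [pow_one] using integrable_pow_mul_gauss 1)
    (tendsto_gauss_atBot.neg.congr' (by simp))
    (tendsto_gauss_atTop.neg.congr' (by simp))
  simpa [pow_one] using h

lemma gauss_I2 : ∫ x : ℝ, x ^ 2 * Real.exp (-x ^ 2 / 2) = √(2 * π) := by
  have := gauss_rec 0
  simp only [pow_zero, one_mul] at this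
  rw [this, gauss_I0]; norm_num

lemma gauss_I3 : ∫ x : ℝ, x ^ 3 * Real.exp (-x ^ 2 / 2) = 0 := by
  have := gauss_rec 1
  rw [show (1:ℕ)+2 = 3 from rfl] at this
  rw [this, gauss_I1]; ring

lemma gauss_I4 : ∫ x : ℝ, x ^ 4 * Real.exp (-x ^ 2 / 2) = 3 * √(2 * π) := by
  have := gauss_rec 2
  rw [show (2:ℕ)+2 = 4 from rfl] at this
  rw [this, gauss_I2]; norm_num

lemma gaussianPDFReal_zero_one (x : ℝ) :
    gaussianPDFReal 0 1 x = (√(2 * π))⁻¹ * Real.exp (-x ^ 2 / 2) := by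
  simp [gaussianPDFReal]

lemma integral_gaussianReal_eq (g : ℝ → ℝ) :
    ∫ x, g x ∂(gaussianReal 0 1)
      = (√(2 * π))⁻¹ * ∫ x, g x * Real.exp (-x ^ 2 / 2) := by
  rw [gaussianReal_of_var_ne_zero _ one_ne_zero, gaussianPDF_def]
  have hmeas : Measurable fun x => (gaussianPDFReal 0 1 x).toNNReal :=
    (measurable_gaussianPDFReal 0 1).real_toNNReal
  rw [show (fun x => ENNReal.ofReal (gaussianPDFReal 0 1 x))
      = fun x => ((gaussianPDFReal 0 1 x).toNNReal : ℝ≥0∞) from rfl]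
  rw [integral_withDensity_eq_integral_smul hmeas]
  simp only [NNReal.smul_def, Real.coe_toNNReal _ (gaussianPDFReal_nonneg 0 1 _), smul_eq_mul]
  simp only [gaussianPDFReal_zero_one]
  rw [← integral_const_mul]
  congr 1 with x
  ring

lemma integrable_pow_gaussianReal (k : ℕ) :
    Integrable (fun x : ℝ => x ^ k) (gaussianReal 0 1) := by
  rw [gaussianReal_of_var_ne_zero _ one_ne_zero, gaussianPDF_def]
  have hmeas : Measurable fun x => (gaussianPDFReal 0 1 x).toNNReal :=
    (measurable_gaussianPDFReal 0 1).real_toNNReal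
  rw [show (fun x => ENNReal.ofReal (gaussianPDFReal 0 1 x))
      = fun x => ((gaussianPDFReal 0 1 x).toNNReal : ℝ≥0∞) from rfl]
  rw [integrable_withDensity_iff_integrable_smul hmeas]
  have : Integrable (fun x : ℝ => (√(2 * π))⁻¹ * (x ^ k * Real.exp (-x ^ 2 / 2))) :=
    (integrable_pow_mul_gauss k).const_mul _
  refine this.congr (ae_of_all _ fun x => ?_)
  show _ = (gaussianPDFReal 0 1 x).toNNReal • x ^ k
  rw [NNReal.smul_def, Real.coe_toNNReal _ (gaussianPDFReal_nonneg 0 1 x),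
    gaussianPDFReal_zero_one, smul_eq_mul]
  ring

noncomputable def Mγ (k : ℕ) : ℝ := ∫ x, x ^ k ∂(gaussianReal 0 1)

lemma sqrt_two_pi_pos : (0:ℝ) < √(2 * π) := Real.sqrt_pos.mpr (by positivity)

lemma Mγ_eq (k : ℕ) : Mγ k = (√(2 * π))⁻¹ * ∫ x, x ^ k * Real.exp (-x ^ 2 / 2) :=
  integral_gaussianReal_eq _

lemma Mγ0 : Mγ 0 = 1 := by
  rw [Mγ_eq]
  simp only [pow_zero, one_mul, gauss_I0]
  exact inv_mul_cancel₀ sqrt_two_pi_pos.ne'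

lemma Mγ1 : Mγ 1 = 0 := by rw [Mγ_eq, gauss_I1, mul_zero]

lemma Mγ2 : Mγ 2 = 1 := by
  rw [Mγ_eq, gauss_I2]; exact inv_mul_cancel₀ sqrt_two_pi_pos.ne'

lemma Mγ3 : Mγ 3 = 0 := by rw [Mγ_eq, gauss_I3, mul_zero]

lemma Mγ4 : Mγ 4 = 3 := by
  rw [Mγ_eq, gauss_I4]
  field_simp

lemma integrable_pi_prod {n : ℕ} (f : Fin n → ℝ → ℝ) (hf : ∀ i, Integrable (f i) γm) :
    Integrable (fun a : Fin n → ℝ => ∏ i, f i (a i)) (Measure.pi fun _ => γm) := by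
  letI : MeasureSpace ℝ := ⟨γm⟩
  haveI : SigmaFinite (volume : Measure ℝ) := inferInstanceAs (SigmaFinite γm)
  exact Integrable.fintype_prod (f := f) hf

lemma integral_pi_prod {n : ℕ} (f : Fin n → ℝ → ℝ) :
    ∫ a : Fin n → ℝ, ∏ i, f i (a i) ∂(Measure.pi fun _ => γm) = ∏ i, ∫ x, f i x ∂γm := by
  letI : MeasureSpace ℝ := ⟨γm⟩
  haveI : SigmaFinite (volume : Measure ℝ) := inferInstanceAs (SigmaFinite γm)
  exact integral_fintype_prod_eq_prod (fun i => f i)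

def cnt {n : ℕ} (i j k l m : Fin n) : ℕ :=
  (if m = i then 1 else 0) + (if m = j then 1 else 0)
    + (if m = k then 1 else 0) + (if m = l then 1 else 0)

lemma single_eq {n : ℕ} (a : Fin n → ℝ) (i : Fin n) :
    a i = ∏ m, a m ^ (if m = i then 1 else 0) := by
  rw [show (fun m => a m ^ (if m = i then 1 else 0))
      = fun m => if m = i then a m else 1 from funext fun m => by split <;> simp]
  rw [Finset.prod_ite_eq' Finset.univ i a]
  simp

lemma monomial_eq {n : ℕ} (a : Fin n → ℝ) (i j k l : Fin n) :
    a i * a j * a k * a l = ∏ m, a m ^ cnt i j k l m := by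
  rw [single_eq a i, single_eq a j, single_eq a k, single_eq a l,
    ← Finset.prod_mul_distrib, ← Finset.prod_mul_distrib, ← Finset.prod_mul_distrib]
  exact Finset.prod_congr rfl fun m _ => by rw [cnt, pow_add, pow_add, pow_add]

lemma integrable_monomial {n : ℕ} (i j k l : Fin n) :
    Integrable (fun a : Fin n → ℝ => a i * a j * a k * a l) (Measure.pi fun _ => γm) := by
  simp only [monomial_eq]
  exact integrable_pi_prod _ fun m => integrable_pow_gaussianReal _

lemma prod_support {n : ℕ} (f : ℕ → ℝ) (hf0 : f 0 = 1) (g : Fin n → ℕ) (s : Finset (Fin n))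
    (hg : ∀ m ∉ s, g m = 0) : ∏ m, f (g m) = ∏ m ∈ s, f (g m) :=
  (Finset.prod_subset s.subset_univ fun x _ hx => by rw [hg x hx, hf0]).symm

lemma integral_monomial {n : ℕ} (i j k l : Fin n) :
    ∫ a : Fin n → ℝ, a i * a j * a k * a l ∂(Measure.pi fun _ => γm)
      = (if i = j then (1:ℝ) else 0) * (if k = l then 1 else 0)
        + (if i = k then 1 else 0) * (if j = l then 1 else 0)
        + (if i = l then 1 else 0) * (if j = k then 1 else 0) := by
  simp only [monomial_eq]
  rw [integral_pi_prod (fun m x => x ^ cnt i j k l m)]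
  have hM : ∀ m : Fin n, (∫ x : ℝ, x ^ cnt i j k l m ∂γm) = Mγ (cnt i j k l m) := fun m => rfl
  simp only [hM]
  by_cases hij : i = j
  · subst hij
    by_cases hik : i = k
    · subst hik
      by_cases hil : i = l
      · subst hil
        rw [prod_support Mγ Mγ0 _ {i} (fun m hm => by
          simp only [Finset.mem_singleton] at hm; simp [cnt, hm])]
        simp [cnt, Mγ4]
        norm_num
      · rw [prod_support Mγ Mγ0 _ {i, l} (fun m hm => by
          simp only [Finset.mem_insert, Finset.mem_singleton, not_or] at hm
          simp [cnt, hm.1, hm.2])]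
        rw [Finset.prod_insert (by simp [hil]), Finset.prod_singleton]
        have hli : l ≠ i := fun h => hil h.symm
        simp [cnt, hil, hli, Mγ3, Mγ1]
    · by_cases hkl : k = l
      · subst hkl
        rw [prod_support Mγ Mγ0 _ {i, k} (fun m hm => by
          simp only [Finset.mem_insert, Finset.mem_singleton, not_or] at hm
          simp [cnt, hm.1, hm.2])]
        rw [Finset.prod_insert (by simp [hik]), Finset.prod_singleton]
        have hki : k ≠ i := fun h => hik h.symm
        simp [cnt, hik, hki, Mγ2]
      · by_cases hil : i = l
        · subst hil
          rw [prod_support Mγ Mγ0 _ {i, k} (fun m hm => by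
            simp only [Finset.mem_insert, Finset.mem_singleton, not_or] at hm
            simp [cnt, hm.1, hm.2])]
          rw [Finset.prod_insert (by simp [hik]), Finset.prod_singleton]
          have hki : k ≠ i := fun h => hik h.symm
          simp [cnt, hik, hki, Mγ3, Mγ1]
        · rw [prod_support Mγ Mγ0 _ {i, k, l} (fun m hm => by
            simp only [Finset.mem_insert, Finset.mem_singleton, not_or] at hm
            simp [cnt, hm.1, hm.2.1, hm.2.2])]
          rw [Finset.prod_insert (by simp [hik, hil]),
            Finset.prod_insert (by simp [hkl]), Finset.prod_singleton]
          have hki : k ≠ i := fun h => hik h.symm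
          have hli : l ≠ i := fun h => hil h.symm
          simp [cnt, hik, hil, hki, hli, hkl, Mγ2, Mγ1]
  · by_cases hik : i = k
    · subst hik
      by_cases hjl : j = l
      · subst hjl
        have hji : j ≠ i := fun h => hij h.symm
        rw [prod_support Mγ Mγ0 _ {i, j} (fun m hm => by
          simp only [Finset.mem_insert, Finset.mem_singleton, not_or] at hm
          simp [cnt, hm.1, hm.2])]
        rw [Finset.prod_insert (by simp [hij]), Finset.prod_singleton]
        simp [cnt, hij, hji, Mγ2]
      · by_cases hil : i = l
        · subst hil
          have hji : j ≠ i := fun h => hij h.symm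
          rw [prod_support Mγ Mγ0 _ {i, j} (fun m hm => by
            simp only [Finset.mem_insert, Finset.mem_singleton, not_or] at hm
            simp [cnt, hm.1, hm.2])]
          rw [Finset.prod_insert (by simp [hij]), Finset.prod_singleton]
          simp [cnt, hij, hji, Mγ3, Mγ1]
        · have hji : j ≠ i := fun h => hij h.symm
          have hli : l ≠ i := fun h => hil h.symm
          rw [prod_support Mγ Mγ0 _ {i, j, l} (fun m hm => by
            simp only [Finset.mem_insert, Finset.mem_singleton, not_or] at hm
            simp [cnt, hm.1, hm.2.1, hm.2.2])]
          rw [Finset.prod_insert (by simp [hij, hil]),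
            Finset.prod_insert (by simp [hjl]), Finset.prod_singleton]
          simp [cnt, hij, hji, hil, hli, hjl, Mγ2, Mγ1]
    · by_cases hil : i = l
      · subst hil
        by_cases hjk : j = k
        · subst hjk
          have hji : j ≠ i := fun h => hij h.symm
          rw [prod_support Mγ Mγ0 _ {i, j} (fun m hm => by
            simp only [Finset.mem_insert, Finset.mem_singleton, not_or] at hm
            simp [cnt, hm.1, hm.2])]
          rw [Finset.prod_insert (by simp [hij]), Finset.prod_singleton]
          simp [cnt, hij, hji, Mγ2]
        · have hji : j ≠ i := fun h => hij h.symm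
          have hki : k ≠ i := fun h => hik h.symm
          rw [prod_support Mγ Mγ0 _ {i, j, k} (fun m hm => by
            simp only [Finset.mem_insert, Finset.mem_singleton, not_or] at hm
            simp [cnt, hm.1, hm.2.1, hm.2.2])]
          rw [Finset.prod_insert (by simp [hij, hik]),
            Finset.prod_insert (by simp [hjk]), Finset.prod_singleton]
          simp [cnt, hij, hji, hik, hki, hjk, Mγ2, Mγ1]
      · have hji : j ≠ i := fun h => hij h.symm
        have hki : k ≠ i := fun h => hik h.symm
        have hli : l ≠ i := fun h => hil h.symm
        have h0 : Mγ (cnt i j k l i) = 0 := by simp [cnt, hij, hik, hil, Mγ1]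
        rw [Finset.prod_eq_zero (Finset.mem_univ i) h0]
        simp [hij, hik, hil]

lemma key_integral {n : ℕ} (u v : Fin n → ℝ) :
    ∫ a : Fin n → ℝ, (∑ i, a i * u i) ^ 2 * (∑ i, a i * v i) ^ 2 ∂(Measure.pi fun _ => γm)
      = (∑ i, u i ^ 2) * (∑ i, v i ^ 2) + 2 * (∑ i, u i * v i) ^ 2 := by
  have expand : ∀ a : Fin n → ℝ, (∑ i, a i * u i) ^ 2 * (∑ i, a i * v i) ^ 2
      = ∑ i, ∑ j, ∑ k, ∑ l, a i * a j * a k * a l * (v i * v j * u k * u l) := by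
    intro a
    simp only [pow_two, Finset.sum_mul, Finset.mul_sum]
    refine Finset.sum_congr rfl fun i _ => Finset.sum_congr rfl fun j _ =>
      Finset.sum_congr rfl fun k _ => Finset.sum_congr rfl fun l _ => by ring
  simp only [expand]
  have hint : ∀ i j k l : Fin n, Integrable
      (fun a : Fin n → ℝ => a i * a j * a k * a l * (v i * v j * u k * u l))
      (Measure.pi fun _ => γm) := fun i j k l => (integrable_monomial i j k l).mul_const _
  rw [integral_finset_sum _ fun i _ => integrable_finset_sum _ fun j _ =>
    integrable_finset_sum _ fun k _ => integrable_finset_sum _ fun l _ => hint i j k l]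
  calc
    ∑ i, ∫ a : Fin n → ℝ, ∑ j, ∑ k, ∑ l, a i * a j * a k * a l * (v i * v j * u k * u l)
        ∂(Measure.pi fun _ => γm)
      = ∑ i, ∑ j, ∑ k, ∑ l, ((if i = j then (1:ℝ) else 0) * (if k = l then 1 else 0)
        + (if i = k then 1 else 0) * (if j = l then 1 else 0)
        + (if i = l then 1 else 0) * (if j = k then 1 else 0)) * (v i * v j * u k * u l) := by
        refine Finset.sum_congr rfl fun i _ => ?_
        rw [integral_finset_sum _ fun j _ => integrable_finset_sum _ fun k _ =>
          integrable_finset_sum _ fun l _ => hint i j k l]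
        refine Finset.sum_congr rfl fun j _ => ?_
        rw [integral_finset_sum _ fun k _ => integrable_finset_sum _ fun l _ => hint i j k l]
        refine Finset.sum_congr rfl fun k _ => ?_
        rw [integral_finset_sum _ fun l _ => hint i j k l]
        refine Finset.sum_congr rfl fun l _ => ?_
        rw [integral_mul_const, integral_monomial]
    _ = (∑ i, u i ^ 2) * (∑ i, v i ^ 2) + 2 * (∑ i, u i * v i) ^ 2 := by
        rw [mul_comm (∑ i, u i ^ 2), Finset.sum_mul_sum, pow_two, Finset.sum_mul_sum, Finset.mul_sum]
        simp only [add_mul, Finset.sum_add_distrib, ite_mul, one_mul, zero_mul, mul_ite, mul_zero,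
          Finset.sum_ite_irrel, Finset.sum_ite_eq, Finset.sum_ite_eq', Finset.mem_univ, if_true,
          Finset.sum_const_zero, Finset.mul_sum]
        simp only [← Finset.sum_add_distrib]
        exact Finset.sum_congr rfl fun i _ => Finset.sum_congr rfl fun j _ => by ring

theorem stmt6 (n : ℕ) (x z : EuclideanSpace ℝ (Fin n)) :
    ∫ a, ((inner ℝ a z : ℝ) ^ 2 - (inner ℝ a x : ℝ) ^ 2) ^ 2
        ∂(Measure.map (MeasurableEquiv.toLp 2 (Fin n → ℝ))
            (Measure.pi fun _ : Fin n => gaussianReal 0 1)) =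
      3 * ‖z‖ ^ 4 + 3 * ‖x‖ ^ 4 - 2 * ‖z‖ ^ 2 * ‖x‖ ^ 2 - 4 * (inner ℝ z x : ℝ) ^ 2 := by
  rw [MeasureTheory.integral_map_equiv]
  have hinner : ∀ (a : Fin n → ℝ) (w : EuclideanSpace ℝ (Fin n)),
      (inner ℝ ((MeasurableEquiv.toLp 2 (Fin n → ℝ)) a) w : ℝ) = ∑ i, a i * w i := by
    intro a w
    simp [PiLp.inner_apply, mul_comm]
  simp only [hinner]
  have hz : ‖z‖ ^ 2 = ∑ i, z i * z i := by
    rw [← real_inner_self_eq_norm_sq]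
    rw [PiLp.inner_apply]; simp [sq]
  have hx : ‖x‖ ^ 2 = ∑ i, x i * x i := by
    rw [← real_inner_self_eq_norm_sq]
    rw [PiLp.inner_apply]; simp [sq]
  have hzx : (inner ℝ z x : ℝ) = ∑ i, z i * x i := by
    simp [PiLp.inner_apply, mul_comm]
  have step : ∀ a : Fin n → ℝ,
      ((∑ i, a i * z i) ^ 2 - (∑ i, a i * x i) ^ 2) ^ 2
        = (∑ i, a i * (z i - x i)) ^ 2 * (∑ i, a i * (z i + x i)) ^ 2 := by
    intro a
    have h1 : ∑ i, a i * (z i - x i) = (∑ i, a i * z i) - ∑ i, a i * x i := by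
      rw [← Finset.sum_sub_distrib]
      exact Finset.sum_congr rfl fun i _ => by ring
    have h2 : ∑ i, a i * (z i + x i) = (∑ i, a i * z i) + ∑ i, a i * x i := by
      rw [← Finset.sum_add_distrib]
      exact Finset.sum_congr rfl fun i _ => by ring
    rw [h1, h2]; ring
  simp only [step]
  rw [key_integral]
  have e1 : ∑ i, (z i - x i) ^ 2 = (∑ i, z i * z i) - 2 * (∑ i, z i * x i) + ∑ i, x i * x i := by
    have h : ∀ i : Fin n, (z i - x i) ^ 2 = z i * z i - 2 * (z i * x i) + x i * x i :=
      fun i => by ring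
    simp only [h]
    rw [Finset.sum_add_distrib, Finset.sum_sub_distrib, Finset.mul_sum]
  have e2 : ∑ i, (z i + x i) ^ 2 = (∑ i, z i * z i) + 2 * (∑ i, z i * x i) + ∑ i, x i * x i := by
    have h : ∀ i : Fin n, (z i + x i) ^ 2 = z i * z i + 2 * (z i * x i) + x i * x i :=
      fun i => by ring
    simp only [h]
    rw [Finset.sum_add_distrib, Finset.sum_add_distrib, Finset.mul_sum]
  have e3 : ∑ i, (z i - x i) * (z i + x i) = (∑ i, z i * z i) - ∑ i, x i * x i := by
    rw [← Finset.sum_sub_distrib]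
    exact Finset.sum_congr rfl fun i _ => by ring
  rw [e1, e2, e3, hzx, show (3:ℝ) * ‖z‖ ^ 4 = 3 * (‖z‖ ^ 2) ^ 2 by ring,
    show (3:ℝ) * ‖x‖ ^ 4 = 3 * (‖x‖ ^ 2) ^ 2 by ring, hz, hx]
  ring
end

section
/- Fix x ∈ ℝ^n with x ≠ 0 and define the expected phase-retrieval loss ḡ : ℝ^n → ℝ by ḡ(z) = (3/2)‖z‖⁴ + (3/2)‖x‖⁴ − ‖z‖²‖x‖² − 2⟨z, x⟩². Then the gradient of ḡ at z vanishes if and only if one of the following holds: z = 0, or z = x, or z = −x, or (⟨z, x⟩ = 0 and 3‖z‖² = ‖x‖²). In particular the spurious critical points form the ring {z : ⟨z, x⟩ = 0, ‖z‖² = ‖x‖²/3}. -/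
theorem stmt7 (n : ℕ) (x : EuclideanSpace ℝ (Fin n)) (hx : x ≠ 0)
    (g : EuclideanSpace ℝ (Fin n) → ℝ)
    (hg : ∀ z, g z = (3 / 2) * ‖z‖ ^ 4 + (3 / 2) * ‖x‖ ^ 4 - ‖z‖ ^ 2 * ‖x‖ ^ 2
        - 2 * (inner ℝ z x : ℝ) ^ 2)
    (z : EuclideanSpace ℝ (Fin n)) :
    gradient g z = 0 ↔
      z = 0 ∨ z = x ∨ z = -x ∨ ((inner ℝ z x : ℝ) = 0 ∧ 3 * ‖z‖ ^ 2 = ‖x‖ ^ 2) := by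
  have hgfun : g = fun z => (3 / 2) * ‖z‖ ^ 4 + (3 / 2) * ‖x‖ ^ 4 - ‖z‖ ^ 2 * ‖x‖ ^ 2
      - 2 * (inner ℝ z x : ℝ) ^ 2 := funext hg
  subst hgfun
  have hG : HasGradientAt (fun z => (3 / 2) * ‖z‖ ^ 4 + (3 / 2) * ‖x‖ ^ 4 - ‖z‖ ^ 2 * ‖x‖ ^ 2
        - 2 * (inner ℝ z x : ℝ) ^ 2)
      ((6 * ‖z‖ ^ 2 - 2 * ‖x‖ ^ 2) • z - (4 * (inner ℝ z x : ℝ)) • x) z := by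
    have hq : HasFDerivAt (fun z : EuclideanSpace ℝ (Fin n) => ‖z‖ ^ 2)
        (2 • (innerSL ℝ z)) z := by
      simpa using (hasFDerivAt_id z).norm_sq
    have hp : HasFDerivAt (fun z : EuclideanSpace ℝ (Fin n) => (inner ℝ z x : ℝ))
        (innerSL ℝ x) z := by
      refine ((innerSL ℝ x).hasFDerivAt).congr_of_eventuallyEq
        (Filter.Eventually.of_forall fun y => ?_)
      simp [real_inner_comm]
    have hD := ((((hq.mul hq).const_mul ((3:ℝ)/2)).add
        (hasFDerivAt_const ((3/2) * ‖x‖^4) z)).sub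
        (hq.mul_const (‖x‖^2))).sub ((hp.mul hp).const_mul (2:ℝ))
    rw [hasGradientAt_iff_hasFDerivAt]
    refine (hD.congr_of_eventuallyEq (Filter.Eventually.of_forall fun w => ?_)).congr_fderiv ?_
    · simp only [Pi.add_apply, Pi.sub_apply, Pi.mul_apply]; ring
    ext y
    simp [inner_sub_left, inner_smul_left, real_inner_comm, real_inner_smul_left]
    ring
  rw [hG.gradient]
  have hxx : (inner ℝ x x : ℝ) = ‖x‖ ^ 2 := real_inner_self_eq_norm_sq x
  have hx2 : ‖x‖ ^ 2 ≠ 0 := by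
    simpa using hx
  constructor
  · intro h
    rw [sub_eq_zero] at h
    -- inner with x
    have h1 : (6 * ‖z‖ ^ 2 - 2 * ‖x‖ ^ 2) * (inner ℝ z x : ℝ)
        = 4 * (inner ℝ z x : ℝ) * ‖x‖ ^ 2 := by
      have h0 := congrArg (fun v => (inner ℝ x v : ℝ)) h
      simp only [real_inner_smul_right] at h0
      rw [hxx] at h0
      have hcomm : (inner ℝ x z : ℝ) = inner ℝ z x := real_inner_comm z x
      rw [hcomm] at h0
      linear_combination h0
    have key : (inner ℝ z x : ℝ) = 0 ∨ ‖z‖ ^ 2 = ‖x‖ ^ 2 := by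
      rcases mul_eq_zero.1 (show (inner ℝ z x : ℝ) * (‖z‖ ^ 2 - ‖x‖ ^ 2) = 0 by nlinarith) with h' | h'
      · exact Or.inl h'
      · exact Or.inr (by linarith)
    rcases key with hc | hn
    · rw [hc] at h
      simp only [mul_zero, zero_smul] at h
      rcases smul_eq_zero.1 h with ha | hz
      · exact Or.inr (Or.inr (Or.inr ⟨hc, by linarith⟩))
      · exact Or.inl hz
    · -- ‖z‖² = ‖x‖²
      rw [hn] at h
      have h2 : (4 * ‖x‖ ^ 2) • z = (4 * (inner ℝ z x : ℝ)) • x := by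
        convert h using 2; ring
      have h4 : 4 * ‖x‖ ^ 2 * ‖z‖ ^ 2 = 4 * (inner ℝ z x : ℝ) * (inner ℝ z x : ℝ) := by
        have h0 := congrArg (fun v => (inner ℝ v z : ℝ)) h2
        simp only [real_inner_smul_left] at h0
        rw [real_inner_self_eq_norm_sq] at h0
        have hcomm : (inner ℝ x z : ℝ) = inner ℝ z x := real_inner_comm z x
        rw [hcomm] at h0
        linear_combination h0
      have h5 : (inner ℝ z x : ℝ) ^ 2 = (‖x‖ ^ 2) ^ 2 := by nlinarith
      have h6 : (inner ℝ z x : ℝ) = ‖x‖ ^ 2 ∨ (inner ℝ z x : ℝ) = -‖x‖ ^ 2 := sq_eq_sq_iff_eq_or_eq_neg.1 h5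
      have h42 : (4 : ℝ) * ‖x‖ ^ 2 ≠ 0 := by positivity
      rcases h6 with hi | hi
      · refine Or.inr (Or.inl ?_)
        rw [hi] at h2
        exact smul_right_injective _ h42 h2
      · refine Or.inr (Or.inr (Or.inl ?_))
        rw [hi] at h2
        have : (4 * ‖x‖ ^ 2) • z = (4 * ‖x‖ ^ 2) • (-x : EuclideanSpace ℝ (Fin n)) := by
          rw [h2]; module
        exact smul_right_injective _ h42 this
  · rintro (rfl | rfl | rfl | ⟨hc, hn⟩)
    · simp
    · rw [real_inner_self_eq_norm_sq]
      module
    · have : (inner ℝ (-x) x : ℝ) = -‖x‖ ^ 2 := by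
        simp [inner_neg_left, hxx]
      rw [this, norm_neg]
      module
    · rw [hc]
      have : 6 * ‖z‖ ^ 2 - 2 * ‖x‖ ^ 2 = 0 := by linarith
      rw [this]
      simp
end

section
/- Fix x ∈ ℝ^n with x ≠ 0 and define ḡ : ℝ^n → ℝ by ḡ(z) = (3/2)‖z‖⁴ + (3/2)‖x‖⁴ − ‖z‖²‖x‖² − 2⟨z, x⟩². Let z ∈ ℝ^n satisfy ⟨z, x⟩ = 0 and 3‖z‖² = ‖x‖². Then the second derivative at t = 0 of the function t ↦ ḡ(z + t·x) equals −4‖x‖⁴ < 0. In particular every point of the ring of spurious critical points of ḡ admits the negative curvature direction x, so these critical points are strict saddles. -/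
theorem stmt8 (n : ℕ) (x : EuclideanSpace ℝ (Fin n)) (hx : x ≠ 0)
    (g : EuclideanSpace ℝ (Fin n) → ℝ)
    (hg : ∀ z, g z = (3 / 2) * ‖z‖ ^ 4 + (3 / 2) * ‖x‖ ^ 4 - ‖z‖ ^ 2 * ‖x‖ ^ 2
        - 2 * (inner ℝ z x : ℝ) ^ 2)
    (z : EuclideanSpace ℝ (Fin n))
    (hzx : (inner ℝ z x : ℝ) = 0) (hring : 3 * ‖z‖ ^ 2 = ‖x‖ ^ 2) :
    deriv (deriv fun t : ℝ => g (z + t • x)) 0 = -4 * ‖x‖ ^ 4 ∧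
      (-4 : ℝ) * ‖x‖ ^ 4 < 0 := by
  have hx' : ‖x‖ ≠ 0 := norm_ne_zero_iff.mpr hx
  have hxpos : 0 < ‖x‖ ^ 4 := by positivity
  set C : ℝ := (3/2)*‖z‖^4 + (3/2)*‖x‖^4 - ‖z‖^2*‖x‖^2 with hC
  have hB : (fun t : ℝ => g (z + t • x)) =
      fun t : ℝ => C + (-2*‖x‖^4)*t^2 + (3/2)*‖x‖^4*t^4 := by
    funext t
    have h1 : (inner ℝ (z + t • x) x : ℝ) = t * ‖x‖^2 := by
      rw [inner_add_left, real_inner_smul_left, hzx, real_inner_self_eq_norm_sq]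
      ring
    have h2 : ‖z + t • x‖^2 = ‖z‖^2 + t^2 * ‖x‖^2 := by
      rw [norm_add_sq_real, real_inner_smul_right, hzx, norm_smul]
      simp [mul_pow, sq_abs]
    have h4 : ‖z + t • x‖^4 = (‖z‖^2 + t^2 * ‖x‖^2)^2 := by
      rw [← h2]; ring
    rw [hg, h1, h4, h2, hC]
    linear_combination (t^2 * ‖x‖^2) * hring
  rw [hB]
  constructor
  · have hd1 : deriv (fun t : ℝ => C + (-2*‖x‖^4)*t^2 + (3/2)*‖x‖^4*t^4) =
        fun t : ℝ => (-2*‖x‖^4)*(2*t) + (3/2)*‖x‖^4*(4*t^3) := by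
      funext t
      have : HasDerivAt (fun t : ℝ => C + (-2*‖x‖^4)*t^2 + (3/2)*‖x‖^4*t^4)
          ((-2*‖x‖^4)*(2*t) + (3/2)*‖x‖^4*(4*t^3)) t := by
        have h2 : HasDerivAt (fun t : ℝ => t^2) (2*t) t := by
          simpa using (hasDerivAt_pow 2 t)
        have h4 : HasDerivAt (fun t : ℝ => t^4) (4*t^3) t := by
          simpa using (hasDerivAt_pow 4 t)
        exact ((h2.const_mul (-2*‖x‖^4)).const_add C).add (h4.const_mul ((3/2)*‖x‖^4))
      exact this.deriv
    rw [hd1]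
    have : HasDerivAt (fun t : ℝ => (-2*‖x‖^4)*(2*t) + (3/2)*‖x‖^4*(4*t^3))
        ((-2*‖x‖^4)*2 + (3/2)*‖x‖^4*(4*(3*(0:ℝ)^2))) 0 := by
      have h1 : HasDerivAt (fun t : ℝ => 2*t) 2 (0:ℝ) := by
        simpa using (hasDerivAt_id (0:ℝ)).const_mul 2
      have h3 : HasDerivAt (fun t : ℝ => 4*t^3) (4*(3*(0:ℝ)^2)) (0:ℝ) := by
        simpa using ((hasDerivAt_pow 3 (0:ℝ)).const_mul 4)
      exact (h1.const_mul (-2*‖x‖^4)).add (h3.const_mul ((3/2)*‖x‖^4))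
    rw [this.deriv]
    ring
  · linarith
end

section
/- Let p₁, …, p_n be multivariate polynomials in n variables over ℂ, and for each i let p_i¹ denote the homogeneous component of p_i of degree equal to the total degree of p_i. If the homogeneous system p₁¹(x) = ⋯ = p_n¹(x) = 0 has only the trivial solution x = 0 in ℂ^n, then the solution set {x ∈ ℂ^n : p₁(x) = ⋯ = p_n(x) = 0} of the original system is finite. -/
open MvPolynomial

namespace Stmt9Aux

variable {σ : Type*} [Fintype σ] {R : Type*} [CommRing R]

/-- Homogeneous component of product with a homogeneous polynomial. -/
lemma hc_mul_homog (a q : MvPolynomial σ R) {d e : ℕ}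
    (hq : q.IsHomogeneous d) (hde : d ≤ e) :
    homogeneousComponent e (a * q) = homogeneousComponent (e - d) a * q := by
  conv_lhs => rw [← sum_homogeneousComponent a]
  rw [Finset.sum_mul, map_sum]
  have key : ∀ k, homogeneousComponent e (homogeneousComponent k a * q)
      = if k = e - d then homogeneousComponent k a * q else 0 := by
    intro k
    have hmem : homogeneousComponent k a * q ∈ homogeneousSubmodule σ R (k + d) :=
      (mem_homogeneousSubmodule _ _).2 ((homogeneousComponent_isHomogeneous k a).mul hq)
    rw [homogeneousComponent_of_mem hmem]
    by_cases hk : k = e - d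
    · rw [if_pos (by omega), if_pos hk]
    · rw [if_neg (by omega), if_neg hk]
  rw [Finset.sum_congr rfl fun k _ => key k, Finset.sum_ite_eq']
  split
  · rfl
  · next hne =>
    have : a.totalDegree < e - d := by
      simp only [Finset.mem_range] at hne; omega
    rw [homogeneousComponent_eq_zero _ a this, zero_mul]

lemma coeff_sub_hc (f : MvPolynomial σ R) {s : σ →₀ ℕ}
    (hs : f.totalDegree ≤ s.sum fun _ e => e) :
    coeff s (f - homogeneousComponent f.totalDegree f) = 0 := by
  have hds : s.degree = s.sum fun _ e => e := by
    simp [Finsupp.degree_apply, Finsupp.sum]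
  rw [coeff_sub, coeff_homogeneousComponent]
  rcases eq_or_lt_of_le hs with hs' | hs'
  · rw [if_pos (by omega), sub_self]
  · rw [if_neg (by omega), coeff_eq_zero_of_totalDegree_lt hs', sub_zero]

lemma totalDegree_sub_hc_lt (f : MvPolynomial σ R) (hf : 0 < f.totalDegree) :
    (f - homogeneousComponent f.totalDegree f).totalDegree < f.totalDegree := by
  rw [totalDegree]
  apply Finset.sup_lt_iff (by simpa using hf) |>.2
  intro s hs
  by_contra hle
  exact (mem_support_iff.1 hs) (coeff_sub_hc f (le_of_not_gt hle))

end Stmt9Aux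

open Stmt9Aux in
theorem stmt9 (n : ℕ) (p : Fin n → MvPolynomial (Fin n) ℂ)
    (h : ∀ x : Fin n → ℂ,
        (∀ i, MvPolynomial.eval x
            (MvPolynomial.homogeneousComponent ((p i).totalDegree) (p i)) = 0) → x = 0) :
    {x : Fin n → ℂ | ∀ i, MvPolynomial.eval x (p i) = 0}.Finite := by
  classical
  let R := MvPolynomial (Fin n) ℂ
  set d : Fin n → ℕ := fun i => (p i).totalDegree with hd
  set q : Fin n → R := fun i => homogeneousComponent (d i) (p i) with hq
  have hqhom : ∀ i, (q i).IsHomogeneous (d i) := fun i => homogeneousComponent_isHomogeneous _ _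
  set J : Ideal R := Ideal.span (Set.range q) with hJ
  set I : Ideal R := Ideal.span (Set.range p) with hI
  -- Step 1: X j ∈ radical J
  have hXrad : ∀ j : Fin n, (X j : R) ∈ J.radical := by
    intro j
    rw [← MvPolynomial.vanishingIdeal_zeroLocus_eq_radical (K := ℂ)]
    rw [MvPolynomial.mem_vanishingIdeal_iff]
    intro x hx
    have hx0 : x = 0 := by
      apply h
      intro i
      have := hx (q i) (Ideal.subset_span ⟨i, rfl⟩)
      exact this
    rw [hx0]
    simp
  -- Step 2: a uniform power
  have hXpow : ∃ N : ℕ, 0 < N ∧ ∀ j : Fin n, (X j : R) ^ N ∈ J := by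
    choose N hN using fun j => Ideal.mem_radical_iff.1 (hXrad j)
    refine ⟨(Finset.univ.sup N) + 1, Nat.succ_pos _, fun j => ?_⟩
    have hle : N j ≤ Finset.univ.sup N + 1 :=
      le_trans (Finset.le_sup (Finset.mem_univ j)) (Nat.le_succ _)
    have heq : (X j : R) ^ (Finset.univ.sup N + 1)
        = X j ^ (Finset.univ.sup N + 1 - N j) * X j ^ N j := by
      rw [← pow_add]; congr 1; omega
    rw [heq]
    exact Ideal.mul_mem_left _ _ (hN j)
  obtain ⟨N, hNpos, hXN⟩ := hXpow
  set M : ℕ := n * N + 1 + Finset.univ.sup d with hM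
  have hMpos : 0 < M := by omega
  have hMd : ∀ i, d i ≤ M := fun i =>
    le_trans (Finset.le_sup (Finset.mem_univ i)) (by omega)
  -- Step 4: monomials of high degree are in J
  have hmono : ∀ (s : Fin n →₀ ℕ) (c : ℂ), M ≤ (s.sum fun _ e => e) →
      (monomial s c : R) ∈ J := by
    intro s c hs
    have hex : ∃ j, N ≤ s j := by
      by_contra hcon
      push_neg at hcon
      have h1 : (s.sum fun _ e => e) ≤ ∑ j : Fin n, s j := by
        rw [Finsupp.sum]
        exact Finset.sum_le_sum_of_subset (Finset.subset_univ _)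
      have h2 : ∑ j : Fin n, s j ≤ n * (N - 1) := by
        calc ∑ j : Fin n, s j ≤ ∑ _j : Fin n, (N - 1) :=
              Finset.sum_le_sum fun j _ => by have := hcon j; omega
          _ = n * (N - 1) := by simp [Finset.sum_const, mul_comm]
      have hnn : n * (N - 1) ≤ n * N := Nat.mul_le_mul_left _ (by omega)
      omega
    obtain ⟨j, hj⟩ := hex
    have hsplit : (s - Finsupp.single j N) + Finsupp.single j N = s := by
      ext k
      simp only [Finsupp.add_apply, Finsupp.tsub_apply, Finsupp.single_apply]
      by_cases hk : j = k
      · subst hk; simp; omega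
      · simp [hk]
    have heq : (monomial s c : R)
        = monomial (s - Finsupp.single j N) c * (X j) ^ N := by
      rw [X_pow_eq_monomial, monomial_mul, mul_one, hsplit]
    rw [heq]
    exact Ideal.mul_mem_left _ _ (hXN j)
  -- Step 5: homogeneous of degree ≥ M in J
  have hhomJ : ∀ (φ : R), M ≤ φ.totalDegree → homogeneousComponent φ.totalDegree φ ∈ J := by
    intro φ hφ
    set e := φ.totalDegree
    rw [as_sum (homogeneousComponent e φ)]
    apply Ideal.sum_mem
    intro s hs
    apply hmono
    have hcoeff : coeff s (homogeneousComponent e φ) ≠ 0 := mem_support_iff.1 hs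
    have hdeg : s.degree = e := by
      by_contra hne
      exact hcoeff ((homogeneousComponent_isHomogeneous e φ).coeff_eq_zero hne)
    have hsum : (s.sum fun _ e => e) = s.degree := by
      rw [Finsupp.degree_apply, Finsupp.sum]
    omega
  -- Step 7: reduction mod I
  have main : ∀ (k : ℕ) (f : R), f.totalDegree ≤ k →
      ∃ g : R, g.totalDegree < M ∧ f - g ∈ I := by
    intro k
    induction k with
    | zero =>
      intro f hf
      exact ⟨f, by omega, by simp⟩
    | succ k ih =>
      intro f hf
      by_cases hfM : f.totalDegree < M
      · exact ⟨f, hfM, by simp⟩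
      push_neg at hfM
      set e := f.totalDegree with he
      have hepos : 0 < e := lt_of_lt_of_le hMpos hfM
      -- top homogeneous component lies in J, get homogeneous representation
      have htopJ : homogeneousComponent e f ∈ J := hhomJ f hfM
      rw [hJ, Ideal.mem_span_range_iff_exists_fun] at htopJ
      obtain ⟨c, hc⟩ := htopJ
      have htop : homogeneousComponent e f
          = ∑ i, homogeneousComponent (e - d i) (c i) * q i := by
        have h1 : homogeneousComponent e (∑ i, c i * q i)
            = ∑ i, homogeneousComponent (e - d i) (c i) * q i := by
          rw [map_sum]
          exact Finset.sum_congr rfl fun i _ =>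
            hc_mul_homog (c i) (q i) (hqhom i) (le_trans (hMd i) hfM)
        have h2 : homogeneousComponent e (homogeneousComponent e f)
            = homogeneousComponent e f := by
          rw [homogeneousComponent_of_mem
            ((mem_homogeneousSubmodule _ _).2 (homogeneousComponent_isHomogeneous e f)), if_pos rfl]
        rw [← h2, ← hc, ← h1, hc]
      set f' : R := f - ∑ i, homogeneousComponent (e - d i) (c i) * p i with hf'
      have hf'deg : f'.totalDegree < e := by
        have hsplit : f' = (f - homogeneousComponent e f)
            + ∑ i, homogeneousComponent (e - d i) (c i) * (q i - p i) := by
          rw [hf', htop]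
          simp only [mul_sub]
          rw [Finset.sum_sub_distrib]
          ring
        rw [hsplit]
        apply lt_of_le_of_lt (totalDegree_add _ _)
        apply max_lt
        · exact totalDegree_sub_hc_lt f hepos
        · apply lt_of_le_of_lt (totalDegree_finset_sum _ _)
          apply Finset.sup_lt_iff (by simpa using hepos) |>.2
          intro i _
          by_cases hpi : q i - p i = 0
          · rw [hpi, mul_zero]; simpa using hepos
          · have hdipos : 0 < d i := by
              by_contra hdi
              apply hpi
              have hdi0 : d i = 0 := by omega
              have : (p i).IsHomogeneous 0 := (totalDegree_zero_iff_isHomogeneous _).mp hdi0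
              have : q i = p i := by
                rw [hq]
                simp only [hdi0]
                rw [homogeneousComponent_of_mem ((mem_homogeneousSubmodule _ _).2 this),
                  if_pos rfl]
              rw [this, sub_self]
            have hqp : (q i - p i).totalDegree < d i := by
              have h2 : (p i - q i).totalDegree < d i :=
                totalDegree_sub_hc_lt (p i) hdipos
              calc (q i - p i).totalDegree = (p i - q i).totalDegree := by
                    rw [← totalDegree_neg, neg_sub]
                _ < d i := h2
            calc (homogeneousComponent (e - d i) (c i) * (q i - p i)).totalDegree
                ≤ (homogeneousComponent (e - d i) (c i)).totalDegree + (q i - p i).totalDegree :=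
                  totalDegree_mul _ _
              _ ≤ (e - d i) + (q i - p i).totalDegree :=
                  Nat.add_le_add_right (homogeneousComponent_isHomogeneous _ _).totalDegree_le _
              _ < e := by have := hMd i; omega
      obtain ⟨g, hg1, hg2⟩ := ih f' (by omega)
      refine ⟨g, hg1, ?_⟩
      have hfI : f - f' ∈ I := by
        rw [hf']
        simp only [sub_sub_cancel]
        exact Ideal.sum_mem _ fun i _ =>
          Ideal.mul_mem_left _ _ (Ideal.subset_span ⟨i, rfl⟩)
      have : f - g = (f - f') + (f' - g) := by ring
      rw [this]
      exact Ideal.add_mem _ hfI hg2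
  -- The quotient is finite dimensional
  set A := R ⧸ I with hA
  have hfin : Module.Finite ℂ A := by
    let L : restrictTotalDegree (Fin n) ℂ M →ₗ[ℂ] A :=
      (Ideal.Quotient.mkₐ ℂ I).toLinearMap.comp (restrictTotalDegree (Fin n) ℂ M).subtype
    apply Module.Finite.of_surjective L
    intro a
    obtain ⟨f, rfl⟩ := Ideal.Quotient.mk_surjective a
    obtain ⟨g, hg1, hg2⟩ := main f.totalDegree f le_rfl
    refine ⟨⟨g, (mem_restrictTotalDegree _ _ _).2 (le_of_lt hg1)⟩, ?_⟩
    show Ideal.Quotient.mkₐ ℂ I g = Ideal.Quotient.mk I f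
    rw [Ideal.Quotient.mkₐ_eq_mk]
    exact (Ideal.Quotient.mk_eq_mk_iff_sub_mem g f).2 (by
      have : g - f = -(f - g) := by ring
      rw [this]; exact neg_mem hg2)
  -- evaluation characters
  set S := {x : Fin n → ℂ | ∀ i, MvPolynomial.eval x (p i) = 0} with hS
  have haeval : ∀ (x : Fin n → ℂ) (f : R), aeval x f = eval x f := by
    intro x f
    rw [aeval_def, Algebra.algebraMap_self]
    rfl
  have hker : ∀ x ∈ S, ∀ a ∈ I, aeval x a = 0 := by
    intro x hx a ha
    have : I ≤ RingHom.ker (aeval x : R →ₐ[ℂ] ℂ) := by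
      rw [hI, Ideal.span_le]
      rintro _ ⟨i, rfl⟩
      rw [SetLike.mem_coe, RingHom.mem_ker]
      rw [haeval]
      exact hx i
    exact this ha
  let φ : S → (A →ₐ[ℂ] ℂ) := fun x =>
    Ideal.Quotient.liftₐ I (aeval (x : Fin n → ℂ)) (hker x x.2)
  have hφinj : Function.Injective φ := by
    intro x y hxy
    have : ∀ j, (x : Fin n → ℂ) j = (y : Fin n → ℂ) j := by
      intro j
      have hx : φ x (Ideal.Quotient.mk I (X j)) = (x : Fin n → ℂ) j := by
        show Ideal.Quotient.liftₐ I (aeval (x : Fin n → ℂ)) (hker x x.2)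
          (Ideal.Quotient.mk I (X j)) = (x : Fin n → ℂ) j
        refine (Ideal.Quotient.lift_mk I _ _).trans ?_
        exact aeval_X _ j
      have hy : φ y (Ideal.Quotient.mk I (X j)) = (y : Fin n → ℂ) j := by
        show Ideal.Quotient.liftₐ I (aeval (y : Fin n → ℂ)) (hker y y.2)
          (Ideal.Quotient.mk I (X j)) = (y : Fin n → ℂ) j
        refine (Ideal.Quotient.lift_mk I _ _).trans ?_
        exact aeval_X _ j
      rw [← hx, ← hy, hxy]
    exact Subtype.ext (funext this)
  have hLI : LinearIndependent ℂ (fun x : S => (φ x).toLinearMap) :=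
    (linearIndependent_algHom_toLinearMap' ℂ A ℂ).comp φ hφinj
  have : Finite S := hLI.finite
  exact Set.toFinite _
end

section
/- Let a₁, …, a_m, x, z ∈ ℝ^n with z ≠ 0, and set Δ_j = ⟨a_j, z⟩² − ⟨a_j, x⟩² and v = x − (⟨z, x⟩/‖z‖²)·z (the component of x orthogonal to z). If the first-order condition Σ_{j=1}^m Δ_j ⟨a_j, z⟩ · a_j = 0 holds, then Σ_{j=1}^m Δ_j ⟨a_j, v⟩² = Σ_{j=1}^m Δ_j ⟨a_j, x⟩². -/
theorem stmt12 (n m : ℕ) (a : Fin m → EuclideanSpace ℝ (Fin n))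
    (x z : EuclideanSpace ℝ (Fin n)) (hz : z ≠ 0)
    (h : ∑ j : Fin m, (((inner ℝ (a j) z : ℝ) ^ 2 - (inner ℝ (a j) x : ℝ) ^ 2) *
        (inner ℝ (a j) z : ℝ)) • a j = 0) :
    ∑ j : Fin m, ((inner ℝ (a j) z : ℝ) ^ 2 - (inner ℝ (a j) x : ℝ) ^ 2) *
        (inner ℝ (a j) (x - ((inner ℝ z x : ℝ) / ‖z‖ ^ 2) • z) : ℝ) ^ 2 =
      ∑ j : Fin m, ((inner ℝ (a j) z : ℝ) ^ 2 - (inner ℝ (a j) x : ℝ) ^ 2) *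
        (inner ℝ (a j) x : ℝ) ^ 2 := by
  have key : ∀ w : EuclideanSpace ℝ (Fin n),
      ∑ j : Fin m, (((inner ℝ (a j) z : ℝ) ^ 2 - (inner ℝ (a j) x : ℝ) ^ 2) *
        (inner ℝ (a j) z : ℝ)) * (inner ℝ (a j) w : ℝ) = 0 := by
    intro w
    have := congrArg (fun s : EuclideanSpace ℝ (Fin n) => (inner ℝ s w : ℝ)) h
    simpa only [sum_inner, real_inner_smul_left, inner_zero_left] using this
  set c : ℝ := (inner ℝ z x : ℝ) / ‖z‖ ^ 2 with hc
  have hx := key x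
  have hz' := key z
  have expand : ∑ j : Fin m, ((inner ℝ (a j) z : ℝ) ^ 2 - (inner ℝ (a j) x : ℝ) ^ 2) *
        (inner ℝ (a j) (x - c • z) : ℝ) ^ 2 =
      (∑ j : Fin m, ((inner ℝ (a j) z : ℝ) ^ 2 - (inner ℝ (a j) x : ℝ) ^ 2) *
        (inner ℝ (a j) x : ℝ) ^ 2)
      + (-2 * c) * ∑ j : Fin m, (((inner ℝ (a j) z : ℝ) ^ 2 - (inner ℝ (a j) x : ℝ) ^ 2) *
        (inner ℝ (a j) z : ℝ)) * (inner ℝ (a j) x : ℝ)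
      + c ^ 2 * ∑ j : Fin m, (((inner ℝ (a j) z : ℝ) ^ 2 - (inner ℝ (a j) x : ℝ) ^ 2) *
        (inner ℝ (a j) z : ℝ)) * (inner ℝ (a j) z : ℝ) := by
    rw [Finset.mul_sum, Finset.mul_sum, ← Finset.sum_add_distrib, ← Finset.sum_add_distrib]
    refine Finset.sum_congr rfl fun j _ => ?_
    rw [inner_sub_right, real_inner_smul_right]
    ring
  rw [expand, hx, hz']
  ring
end

section
/- Let a₁, …, a_m, x, z ∈ ℝ^n with x ≠ 0, and let δ₀, δ₁ be reals with 0 ≤ δ₀ < 1/6 and 0 ≤ δ₁ < 5/36. Assume: (i) ⟨z, x⟩² ≤ δ₀‖z‖²‖x‖²; (ii) (1/3 − δ₀)‖x‖² ≤ ‖z‖² ≤ (1/3 + δ₀)‖x‖²; (iii) (1/m) Σ_{j=1}^m ⟨a_j, z⟩²⟨a_j, x⟩² ≤ (1 + δ₁)(‖z‖²‖x‖² + 2⟨z, x⟩²); and (iv) (1/m) Σ_{j=1}^m ⟨a_j, x⟩⁴ ≥ (3 − δ₁)‖x‖⁴. Then (1/m) Σ_{j=1}^m ( 3⟨a_j,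 z⟩²⟨a_j, x⟩² − ⟨a_j, x⟩⁴ ) < −( ‖z‖²‖x‖² + ⟨z, x⟩² ). In particular, the Riemannian Hessian Rayleigh quotient of the phase-retrieval loss at the critical point zzᵀ in the direction xuᵀ + uxᵀ (u = z/‖z‖), which under the first-order condition equals the left-hand side divided by (‖z‖²‖x‖² + ⟨z, x⟩²), is smaller than −1. -/
theorem stmt13 (n m : ℕ) (a : Fin m → EuclideanSpace ℝ (Fin n))
    (x z : EuclideanSpace ℝ (Fin n)) (hx : x ≠ 0) (δ₀ δ₁ : ℝ)
    (hδ₀ : 0 ≤ δ₀) (hδ₀' : δ₀ < 1 / 6) (hδ₁ : 0 ≤ δ₁) (hδ₁' : δ₁ < 5 / 36)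
    (h1 : (inner ℝ z x : ℝ) ^ 2 ≤ δ₀ * ‖z‖ ^ 2 * ‖x‖ ^ 2)
    (h2 : (1 / 3 - δ₀) * ‖x‖ ^ 2 ≤ ‖z‖ ^ 2)
    (h2' : ‖z‖ ^ 2 ≤ (1 / 3 + δ₀) * ‖x‖ ^ 2)
    (h3 : (1 / m : ℝ) * ∑ j : Fin m, (inner ℝ (a j) z : ℝ) ^ 2 * (inner ℝ (a j) x : ℝ) ^ 2
        ≤ (1 + δ₁) * (‖z‖ ^ 2 * ‖x‖ ^ 2 + 2 * (inner ℝ z x : ℝ) ^ 2))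
    (h4 : (3 - δ₁) * ‖x‖ ^ 4 ≤ (1 / m : ℝ) * ∑ j : Fin m, (inner ℝ (a j) x : ℝ) ^ 4) :
    (1 / m : ℝ) * ∑ j : Fin m,
        (3 * (inner ℝ (a j) z : ℝ) ^ 2 * (inner ℝ (a j) x : ℝ) ^ 2 - (inner ℝ (a j) x : ℝ) ^ 4)
      < -(‖z‖ ^ 2 * ‖x‖ ^ 2 + (inner ℝ z x : ℝ) ^ 2) ∧
    ((1 / m : ℝ) * ∑ j : Fin m,
        (3 * (inner ℝ (a j) z : ℝ) ^ 2 * (inner ℝ (a j) x : ℝ) ^ 2 - (inner ℝ (a j) x : ℝ) ^ 4))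
      / (‖z‖ ^ 2 * ‖x‖ ^ 2 + (inner ℝ z x : ℝ) ^ 2) < -1 := by
  have hx2 : (0:ℝ) < ‖x‖ ^ 2 := by
    have : 0 < ‖x‖ := norm_pos_iff.mpr hx
    positivity
  set P : ℝ := ‖z‖ ^ 2 * ‖x‖ ^ 2 with hP
  set Q : ℝ := (inner ℝ z x : ℝ) ^ 2 with hQ
  have hQ0 : 0 ≤ Q := sq_nonneg _
  have hP0 : 0 ≤ P := by positivity
  have hsum : (1 / m : ℝ) * ∑ j : Fin m,
        (3 * (inner ℝ (a j) z : ℝ) ^ 2 * (inner ℝ (a j) x : ℝ) ^ 2 - (inner ℝ (a j) x : ℝ) ^ 4)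
      = 3 * ((1 / m : ℝ) * ∑ j : Fin m, (inner ℝ (a j) z : ℝ) ^ 2 * (inner ℝ (a j) x : ℝ) ^ 2)
        - (1 / m : ℝ) * ∑ j : Fin m, (inner ℝ (a j) x : ℝ) ^ 4 := by
    rw [Finset.sum_sub_distrib]
    have : ∑ j : Fin m, 3 * (inner ℝ (a j) z : ℝ) ^ 2 * (inner ℝ (a j) x : ℝ) ^ 2
        = 3 * ∑ j : Fin m, (inner ℝ (a j) z : ℝ) ^ 2 * (inner ℝ (a j) x : ℝ) ^ 2 := by
      rw [Finset.mul_sum]; exact Finset.sum_congr rfl fun j _ => by ring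
    rw [this]; ring
  have key : (1 / m : ℝ) * ∑ j : Fin m,
        (3 * (inner ℝ (a j) z : ℝ) ^ 2 * (inner ℝ (a j) x : ℝ) ^ 2 - (inner ℝ (a j) x : ℝ) ^ 4)
      < -(P + Q) := by
    rw [hsum]
    have h4' : (3 - δ₁) * (‖x‖ ^ 2) ^ 2 ≤ (1 / m : ℝ) * ∑ j : Fin m, (inner ℝ (a j) x : ℝ) ^ 4 := by
      have : ‖x‖ ^ 4 = (‖x‖ ^ 2) ^ 2 := by ring
      rw [← this]; exact h4
    nlinarith [mul_nonneg (mul_nonneg (sub_nonneg.mpr hδ₀'.le) (sub_nonneg.mpr hδ₁'.le)) hx2.le,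
      mul_nonneg (sub_nonneg.mpr hδ₀'.le) hP0,
      mul_nonneg (sub_nonneg.mpr hδ₁'.le) hP0,
      mul_nonneg hδ₀ hP0, mul_nonneg hδ₁ hQ0,
      mul_pos (sub_pos.mpr hδ₀') hx2, mul_pos (sub_pos.mpr hδ₁') hx2,
      mul_pos (mul_pos (sub_pos.mpr hδ₀') (sub_pos.mpr hδ₁')) hx2,
      mul_nonneg hδ₀ hQ0, sq_nonneg (‖x‖^2)]
  refine ⟨key, ?_⟩
  have hD : 0 < P + Q := by
    have : (1/3 - δ₀) * ‖x‖ ^ 2 * ‖x‖ ^ 2 ≤ P := by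
      have := mul_le_mul_of_nonneg_right h2 hx2.le
      linarith [this]
    nlinarith [mul_pos (mul_pos (by linarith : (0:ℝ) < 1/3 - δ₀) hx2) hx2]
  rw [div_lt_iff₀ hD]
  linarith [key]
end

section
/- There exist a continuously differentiable function f : ℝ² → ℝ and a step size α ∈ (0, 1/2) with the following properties: (a) the set S of critical points of f that are not local minima has Lebesgue measure zero in ℝ²; (b) the set of initial points (x₀, y₀) ∈ ℝ² for which the gradient descent iterates φ^k(x₀, y₀), where φ(w) = w − α∇f(w), converge as k → ∞ to a point of S, has strictly positive Lebesgue measure. (Such an f may be taken of the form f(x, y) = −p(x) + y², where p ≥ 0 is a C¹ function whose zero set is a compact nowhere-dense set of positive one-dimensional Lebesgue measure, e.g. a Smith–Volterra–Cantor set.) -/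
open MeasureTheory Filter

open Metric
open scoped ENNReal

noncomputable def qenum14 : ℕ → ℚ := (exists_surjective_nat ℚ).choose

lemma qenum14_surj : Function.Surjective qenum14 := (exists_surjective_nat ℚ).choose_spec

noncomputable def q14 (n : ℕ) : ℝ := ((qenum14 n : ℚ) : ℝ)

noncomputable def r14 (n : ℕ) : ℝ := (1/8) * (1/2)^n

noncomputable def K14 : Set ℝ := Set.Icc 0 1 \ ⋃ n : ℕ, Metric.ball (q14 n) (r14 n)

lemma K14_closed : IsClosed K14 :=
  isClosed_Icc.sdiff (isOpen_iUnion fun _ => isOpen_ball)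

lemma K14_vol : 1/2 ≤ volume K14 := by
  have h1 : volume (⋃ n : ℕ, Metric.ball (q14 n) (r14 n)) ≤ 1/2 := by
    refine le_trans (measure_iUnion_le _) ?_
    have : ∀ n : ℕ, volume (Metric.ball (q14 n) (r14 n)) = (1/4 : ℝ≥0∞) * (1/2)^n := by
      intro n
      rw [Real.volume_ball]
      rw [show 2 * r14 n = (1/4) * (1/2)^n by unfold r14; ring]
      rw [ENNReal.ofReal_mul (by norm_num), ENNReal.ofReal_pow (by norm_num),
        ENNReal.ofReal_div_of_pos (by norm_num), ENNReal.ofReal_div_of_pos (by norm_num)]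
      norm_num
    simp_rw [this]
    rw [ENNReal.tsum_mul_left, ENNReal.tsum_geometric]
    rw [show (1 : ℝ≥0∞) - 1/2 = 1/2 by
      rw [ENNReal.sub_eq_of_eq_add (by norm_num)]
      rw [ENNReal.div_add_div_same, show (1:ℝ≥0∞)+1 = 2 from by norm_num, ENNReal.div_self] <;> norm_num]
    rw [show ((1:ℝ≥0∞)/2)⁻¹ = 2 by simp]
    rw [show (1:ℝ≥0∞)/4 * 2 = 1/2 by
      rw [show (4:ℝ≥0∞) = 2*2 from by norm_num, ENNReal.div_eq_inv_mul,
        ENNReal.mul_inv (by norm_num) (by norm_num)]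
      rw [mul_one, mul_assoc, ENNReal.inv_mul_cancel (by norm_num) (by norm_num), mul_one,
        ENNReal.div_eq_inv_mul, mul_one]]
  have h2 : volume (Set.Icc (0:ℝ) 1) = 1 := by simp
  refine le_trans ?_ (le_measure_diff (μ := volume) (s₁ := Set.Icc (0:ℝ) 1)
    (s₂ := ⋃ n : ℕ, Metric.ball (q14 n) (r14 n)))
  rw [h2]
  refine ENNReal.le_sub_of_add_le_right (ne_top_of_le_ne_top (by norm_num) h1) ?_
  calc (1/2 : ℝ≥0∞) + volume (⋃ n : ℕ, Metric.ball (q14 n) (r14 n))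
      ≤ 1/2 + 1/2 := by gcongr
    _ ≤ 1 := by
      rw [ENNReal.div_add_div_same, show (1:ℝ≥0∞)+1 = 2 from by norm_num, ENNReal.div_self] <;> norm_num

lemma K14_nonempty : K14.Nonempty := by
  apply MeasureTheory.nonempty_of_measure_ne_zero (μ := volume)
  intro h
  have := K14_vol
  rw [h] at this
  exact absurd this (by norm_num)

noncomputable def g14 (x : ℝ) : ℝ := Metric.infDist x K14

lemma g14_cont : Continuous g14 := continuous_infDist_pt K14

lemma g14_nonneg (x : ℝ) : 0 ≤ g14 x := Metric.infDist_nonneg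

lemma g14_zero {x : ℝ} (hx : x ∈ K14) : g14 x = 0 := Metric.infDist_zero_of_mem hx

lemma g14_pos {x : ℝ} (hx : x ∉ K14) : 0 < g14 x :=
  (K14_closed.notMem_iff_infDist_pos K14_nonempty).1 hx

noncomputable def P14 (x : ℝ) : ℝ := ∫ t in (0:ℝ)..x, g14 t

lemma P14_hasDerivAt (x : ℝ) : HasDerivAt P14 (g14 x) x :=
  (g14_cont.integral_hasStrictDerivAt 0 x).hasDerivAt

lemma P14_contDiff : ContDiff ℝ 1 P14 := by
  rw [contDiff_one_iff_deriv]
  constructor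
  · exact fun x => (P14_hasDerivAt x).differentiableAt
  · have : deriv P14 = g14 := funext fun x => (P14_hasDerivAt x).deriv
    rw [this]; exact g14_cont

lemma rat_not_mem_K14 (r : ℚ) : (r : ℝ) ∉ K14 := by
  intro hr
  obtain ⟨n, hn⟩ := qenum14_surj r
  refine hr.2 (Set.mem_iUnion.2 ⟨n, ?_⟩)
  have hq : q14 n = (r : ℝ) := by
    unfold q14
    rw [hn]
  rw [Metric.mem_ball, hq, dist_self]
  unfold r14
  positivity

lemma P14_strictMono : StrictMono P14 := by
  intro a b hab
  obtain ⟨r, hr1, hr2⟩ := exists_rat_btwn hab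
  have hrK : 0 < g14 r := g14_pos (rat_not_mem_K14 r)
  -- find a small interval around r where g14 > 0, inside (a,b)
  have hU : IsOpen (g14 ⁻¹' Set.Ioi 0 ∩ Set.Ioo a b) :=
    (isOpen_Ioi.preimage g14_cont).inter isOpen_Ioo
  have hrU : (r : ℝ) ∈ g14 ⁻¹' Set.Ioi 0 ∩ Set.Ioo a b := ⟨hrK, hr1, hr2⟩
  obtain ⟨δ, hδ0, hδ⟩ := Metric.isOpen_iff.1 hU _ hrU
  set u := (r : ℝ) - δ/2
  set v := (r : ℝ) + δ/2
  have huv : u < v := by unfold u v; linarith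
  have hsub : Set.Ioo u v ⊆ g14 ⁻¹' Set.Ioi 0 ∩ Set.Ioo a b := by
    intro x hx
    apply hδ
    rw [Metric.mem_ball, Real.dist_eq, abs_lt]
    cases hx; constructor <;> [unfold u at *; unfold v at *] <;> linarith
  have hau : a ≤ u := by
    by_contra h
    push_neg at h
    have : a ∈ Set.Ioo u v := ⟨h, by unfold v; linarith⟩
    exact absurd ((hsub this).2.1) (lt_irrefl a)
  have hvb : v ≤ b := by
    by_contra h
    push_neg at h
    have : b ∈ Set.Ioo u v := ⟨by unfold u; linarith, h⟩
    exact absurd ((hsub this).2.2) (lt_irrefl b)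
  have hint : ∀ c d : ℝ, IntervalIntegrable g14 volume c d :=
    fun c d => g14_cont.intervalIntegrable c d
  have key : P14 b - P14 a = ∫ t in a..b, g14 t := by
    unfold P14
    exact intervalIntegral.integral_interval_sub_left (hint 0 b) (hint 0 a)
  have hsplit : ∫ t in a..b, g14 t
      = (∫ t in a..u, g14 t) + ((∫ t in u..v, g14 t) + ∫ t in v..b, g14 t) := by
    rw [intervalIntegral.integral_add_adjacent_intervals (hint u v) (hint v b),
      intervalIntegral.integral_add_adjacent_intervals (hint a u) (hint u b)]
  have h1 : 0 ≤ ∫ t in a..u, g14 t :=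
    intervalIntegral.integral_nonneg hau (fun t _ => g14_nonneg t)
  have h3 : 0 ≤ ∫ t in v..b, g14 t :=
    intervalIntegral.integral_nonneg hvb (fun t _ => g14_nonneg t)
  have h2 : 0 < ∫ t in u..v, g14 t := by
    apply intervalIntegral.intervalIntegral_pos_of_pos_on (hint u v) _ huv
    intro x hx
    exact (hsub hx).1
  have : 0 < P14 b - P14 a := by
    rw [key, hsplit]; linarith
  linarith

noncomputable def F14 (w : EuclideanSpace ℝ (Fin 2)) : ℝ := -(P14 (w 0)) + (w 1)^2

noncomputable def G14 (w : EuclideanSpace ℝ (Fin 2)) : EuclideanSpace ℝ (Fin 2) :=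
  (WithLp.equiv 2 (Fin 2 → ℝ)).symm ![-(g14 (w 0)), 2 * w 1]

lemma G14_apply0 (w : EuclideanSpace ℝ (Fin 2)) : G14 w 0 = -(g14 (w 0)) := rfl
lemma G14_apply1 (w : EuclideanSpace ℝ (Fin 2)) : G14 w 1 = 2 * w 1 := rfl

lemma F14_contDiff : ContDiff ℝ 1 F14 :=
  ((P14_contDiff.comp (EuclideanSpace.proj (𝕜 := ℝ) (0 : Fin 2)).contDiff).neg).add
    ((EuclideanSpace.proj (𝕜 := ℝ) (1 : Fin 2)).contDiff.pow 2)

lemma F14_hasGradientAt (w : EuclideanSpace ℝ (Fin 2)) : HasGradientAt F14 (G14 w) w := by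
  have h1 : HasFDerivAt (fun w : EuclideanSpace ℝ (Fin 2) => P14 (w 0))
      (g14 (w 0) • (EuclideanSpace.proj (𝕜 := ℝ) (0 : Fin 2))) w :=
    (P14_hasDerivAt (w 0)).comp_hasFDerivAt (h₂ := P14) w
      (EuclideanSpace.proj (𝕜 := ℝ) (0 : Fin 2)).hasFDerivAt
  have h2 : HasDerivAt (fun y : ℝ => y^2) (2 * w 1) (w 1) := by
    simpa using hasDerivAt_pow 2 (w 1)
  have h3 : HasFDerivAt (fun w : EuclideanSpace ℝ (Fin 2) => (w 1)^2)
      ((2 * w 1) • (EuclideanSpace.proj (𝕜 := ℝ) (1 : Fin 2))) w :=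
    h2.comp_hasFDerivAt (h₂ := fun y : ℝ => y^2) w (EuclideanSpace.proj (𝕜 := ℝ) (1 : Fin 2)).hasFDerivAt
  have hF : HasFDerivAt F14
      (-(g14 (w 0) • (EuclideanSpace.proj (𝕜 := ℝ) (0 : Fin 2)))
        + (2 * w 1) • (EuclideanSpace.proj (𝕜 := ℝ) (1 : Fin 2))) w := h1.neg.add h3
  rw [hasGradientAt_iff_hasFDerivAt]
  refine hF.congr_fderiv ?_
  apply ContinuousLinearMap.ext
  intro v
  rw [InnerProductSpace.toDual_apply_apply]
  rw [PiLp.inner_apply]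
  simp only [RCLike.inner_apply, starRingEnd_apply, star_trivial,
    ContinuousLinearMap.add_apply, ContinuousLinearMap.neg_apply,
    ContinuousLinearMap.smul_apply, PiLp.proj_apply,
    Fin.sum_univ_two, G14_apply0, G14_apply1, smul_eq_mul]
  ring

lemma F14_gradient (w : EuclideanSpace ℝ (Fin 2)) : gradient F14 w = G14 w :=
  (F14_hasGradientAt w).gradient

lemma phi14_apply (u : EuclideanSpace ℝ (Fin 2)) (i : Fin 2) :
    (u - (1/4 : ℝ) • gradient F14 u) i = u i - (1/4) * (G14 u i) := by
  rw [F14_gradient]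
  simp [PiLp.sub_apply, PiLp.smul_apply]

lemma single_decomp (w : EuclideanSpace ℝ (Fin 2)) :
    w = EuclideanSpace.single (0 : Fin 2) (w 0)
      + (w 1) • EuclideanSpace.single (1 : Fin 2) (1 : ℝ) := by
  ext i
  fin_cases i <;>
    simp [PiLp.add_apply, PiLp.smul_apply, EuclideanSpace.single_apply]

lemma iterate14 (w : EuclideanSpace ℝ (Fin 2)) (hw : w 0 ∈ K14) (k : ℕ) :
    (fun u => u - (1/4 : ℝ) • gradient F14 u)^[k] w
      = EuclideanSpace.single (0 : Fin 2) (w 0)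
        + (w 1 * (1/2)^k) • EuclideanSpace.single (1 : Fin 2) (1 : ℝ) := by
  induction k with
  | zero =>
    simpa using single_decomp w
  | succ k ih =>
    rw [Function.iterate_succ_apply', ih]
    set A : EuclideanSpace ℝ (Fin 2) := EuclideanSpace.single (0 : Fin 2) (w 0)
        + (w 1 * (1/2)^k) • EuclideanSpace.single (1 : Fin 2) (1 : ℝ) with hA
    have hA0 : A 0 = w 0 := by
      rw [hA]; simp [PiLp.add_apply, PiLp.smul_apply, EuclideanSpace.single_apply]
    have hA1 : A 1 = w 1 * (1/2)^k := by
      rw [hA]; simp [PiLp.add_apply, PiLp.smul_apply, EuclideanSpace.single_apply]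
    ext i
    rw [phi14_apply]
    fin_cases i
    · rw [show (⟨0, by norm_num⟩ : Fin 2) = (0 : Fin 2) from rfl, G14_apply0, hA0,
        g14_zero hw]
      simp [PiLp.add_apply, PiLp.smul_apply, EuclideanSpace.single_apply]
    · rw [show (⟨1, by norm_num⟩ : Fin 2) = (1 : Fin 2) from rfl, G14_apply1, hA1]
      simp [PiLp.add_apply, PiLp.smul_apply, EuclideanSpace.single_apply]
      ring

lemma tendsto14 (w : EuclideanSpace ℝ (Fin 2)) (hw : w 0 ∈ K14) :
    Tendsto (fun k => (fun u => u - (1/4 : ℝ) • gradient F14 u)^[k] w) atTop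
      (nhds (EuclideanSpace.single (0 : Fin 2) (w 0))) := by
  have hpow : Tendsto (fun k : ℕ => w 1 * (1/2 : ℝ)^k) atTop (nhds 0) := by
    simpa using
      (tendsto_pow_atTop_nhds_zero_of_lt_one (by norm_num : (0:ℝ) ≤ 1/2)
        (by norm_num : (1/2:ℝ) < 1)).const_mul (w 1)
  have hc : Continuous fun t : ℝ =>
      (EuclideanSpace.single (0 : Fin 2) (w 0)
        + t • EuclideanSpace.single (1 : Fin 2) (1 : ℝ)) :=
    continuous_const.add (continuous_id.smul continuous_const)
  have := (hc.tendsto 0).comp hpow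
  simp only [Function.comp_def, zero_smul, add_zero] at this
  refine Tendsto.congr (fun k => ?_) this
  rw [iterate14 w hw k]

lemma grad_zero14 {x₀ : ℝ} (hx : x₀ ∈ K14) :
    gradient F14 (EuclideanSpace.single (0 : Fin 2) x₀) = 0 := by
  rw [F14_gradient]
  ext i
  fin_cases i
  · rw [show (⟨0, by norm_num⟩ : Fin 2) = (0 : Fin 2) from rfl, G14_apply0]
    simp [EuclideanSpace.single_apply, g14_zero hx]
  · rw [show (⟨1, by norm_num⟩ : Fin 2) = (1 : Fin 2) from rfl, G14_apply1]
    simp [EuclideanSpace.single_apply]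

lemma not_localMin14 (x₀ : ℝ) :
    ¬ IsLocalMin F14 (EuclideanSpace.single (0 : Fin 2) x₀) := by
  intro h
  obtain ⟨ε, hε, hball⟩ := Metric.eventually_nhds_iff.1 h
  set w' : EuclideanSpace ℝ (Fin 2) := EuclideanSpace.single (0 : Fin 2) (x₀ + ε/2) with hw'
  have hdist : dist w' (EuclideanSpace.single (0 : Fin 2) x₀) < ε := by
    rw [hw', EuclideanSpace.dist_single_same, Real.dist_eq]
    rw [show x₀ + ε/2 - x₀ = ε/2 by ring, abs_of_pos (by linarith)]
    linarith
  have hle := hball hdist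
  have h0 : F14 (EuclideanSpace.single (0 : Fin 2) x₀) = -(P14 x₀) := by
    unfold F14
    simp [EuclideanSpace.single_apply]
  have h1 : F14 w' = -(P14 (x₀ + ε/2)) := by
    unfold F14
    rw [hw']
    simp [EuclideanSpace.single_apply]
  rw [h0, h1] at hle
  have := P14_strictMono (show x₀ < x₀ + ε/2 by linarith)
  linarith

lemma vol_S14 :
    volume {p : EuclideanSpace ℝ (Fin 2) | gradient F14 p = 0 ∧ ¬ IsLocalMin F14 p} = 0 := by
  have hsub : {p : EuclideanSpace ℝ (Fin 2) | gradient F14 p = 0 ∧ ¬ IsLocalMin F14 p}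
      ⊆ ((MeasurableEquiv.toLp 2 (Fin 2 → ℝ)).symm) ⁻¹' {v : Fin 2 → ℝ | v 1 = 0} := by
    intro p hp
    have h := hp.1
    rw [F14_gradient] at h
    have h1 : G14 p 1 = 0 := by rw [h]; rfl
    rw [G14_apply1] at h1
    have : p 1 = 0 := by linarith
    exact this
  refine measure_mono_null hsub ?_
  rw [(EuclideanSpace.volume_preserving_symm_measurableEquiv_toLp (Fin 2)).measure_preimage]
  · have : {v : Fin 2 → ℝ | v 1 = 0}
        = Set.pi Set.univ (fun i : Fin 2 => if i = 1 then ({0} : Set ℝ) else Set.univ) := by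
      ext v
      simp only [Set.mem_setOf_eq, Set.mem_univ_pi]
      constructor
      · intro hv i
        fin_cases i <;> simp [hv]
      · intro hv
        have := hv 1
        simpa using this
    rw [this, volume_pi_pi]
    rw [Fin.prod_univ_two]
    simp
  · exact ((measurable_pi_apply 1) (MeasurableSet.singleton 0)).nullMeasurableSet

lemma vol_B14 :
    0 < volume {w : EuclideanSpace ℝ (Fin 2) |
      ∃ p, (gradient F14 p = 0 ∧ ¬ IsLocalMin F14 p) ∧
        Tendsto (fun k => (fun u => u - (1/4 : ℝ) • gradient F14 u)^[k] w) atTop (nhds p)} := by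
  have hsub : ((MeasurableEquiv.toLp 2 (Fin 2 → ℝ)).symm) ⁻¹'
        {v : Fin 2 → ℝ | v 0 ∈ K14 ∧ v 1 ∈ Set.Icc (0:ℝ) 1}
      ⊆ {w : EuclideanSpace ℝ (Fin 2) |
        ∃ p, (gradient F14 p = 0 ∧ ¬ IsLocalMin F14 p) ∧
          Tendsto (fun k => (fun u => u - (1/4 : ℝ) • gradient F14 u)^[k] w) atTop (nhds p)} := by
    intro w hw
    have hw0 : w 0 ∈ K14 := hw.1
    exact ⟨EuclideanSpace.single (0 : Fin 2) (w 0),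
      ⟨grad_zero14 hw0, not_localMin14 (w 0)⟩, tendsto14 w hw0⟩
  refine lt_of_lt_of_le ?_ (measure_mono hsub)
  rw [(EuclideanSpace.volume_preserving_symm_measurableEquiv_toLp (Fin 2)).measure_preimage]
  · have heq : {v : Fin 2 → ℝ | v 0 ∈ K14 ∧ v 1 ∈ Set.Icc (0:ℝ) 1}
        = Set.pi Set.univ (fun i : Fin 2 => if i = 0 then K14 else Set.Icc (0:ℝ) 1) := by
      ext v
      simp only [Set.mem_setOf_eq, Set.mem_univ_pi]
      constructor
      · intro hv i
        fin_cases i <;> simp [hv.1, hv.2]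
      · intro hv
        have h0 := hv 0
        have h1 := hv 1
        simp at h0 h1
        exact ⟨h0, h1⟩
    rw [heq, volume_pi_pi, Fin.prod_univ_two]
    simp only [if_pos rfl, if_neg (by norm_num : (1 : Fin 2) ≠ 0)]
    rw [Real.volume_Icc, show (1:ℝ) - 0 = 1 by ring, ENNReal.ofReal_one, mul_one]
    calc (0 : ℝ≥0∞) < 1/2 := by norm_num
      _ ≤ volume K14 := K14_vol
  · refine NullMeasurableSet.inter ?_ ?_
    · exact ((measurable_pi_apply 0) K14_closed.measurableSet).nullMeasurableSet
    · exact ((measurable_pi_apply 1) measurableSet_Icc).nullMeasurableSet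


theorem stmt14 :
    ∃ (f : EuclideanSpace ℝ (Fin 2) → ℝ) (α : ℝ),
      ContDiff ℝ 1 f ∧ 0 < α ∧ α < 1 / 2 ∧
      volume {p : EuclideanSpace ℝ (Fin 2) | gradient f p = 0 ∧ ¬ IsLocalMin f p} = 0 ∧
      0 < volume {w : EuclideanSpace ℝ (Fin 2) |
        ∃ p, (gradient f p = 0 ∧ ¬ IsLocalMin f p) ∧
          Tendsto (fun k => (fun u => u - α • gradient f u)^[k] w) atTop (nhds p)} := by
  exact ⟨F14, 1/4, F14_contDiff, by norm_num, by norm_num, vol_S14, vol_B14⟩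
end
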